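/- For positive integers s and p, the polynomial 1 − x − x^{ps+1} divides the polynomial 1 − Σ_{i=0}^{s} C(s,i)·x^{s(1 + i·p)} in ℤ[x]; moreover the quotient is Σ_{i=0}^{s−1} x^i (x^{sp} + 1)^i. -/

import Mathlib

open Polynomial

theorem poly_div_colored (s p : ℕ) (hs : 1 ≤ s) (hp : 1 ≤ p) :
    ((1 - X - X ^ (p * s + 1) : ℤ[X]) ∣
        1 - ∑ i ∈ Finset.range (s + 1), C ((s.choose i : ℤ)) * X ^ (s * (1 + i * p))) ∧
      (1 - X - X ^ (p * s + 1) : ℤ[X]) *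
          (∑ i ∈ Finset.range s, X ^ i * (X ^ (s * p) + 1) ^ i) =
        1 - ∑ i ∈ Finset.range (s + 1), C ((s.choose i : ℤ)) * X ^ (s * (1 + i * p)) := by
  set y : ℤ[X] := X * (X ^ (s * p) + 1) with hy
  have h1 : (1 - X - X ^ (p * s + 1) : ℤ[X]) = 1 - y := by
    rw [hy, mul_comm p s]; ring
  have h2 : (∑ i ∈ Finset.range s, X ^ i * (X ^ (s * p) + 1) ^ i : ℤ[X]) =
      ∑ i ∈ Finset.range s, y ^ i := by
    simp [hy, mul_pow]
  have h3 : (1 - y) * ∑ i ∈ Finset.range s, y ^ i = 1 - y ^ s := by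
    have := geom_sum_mul y s
    linear_combination -this
  have h4 : (y ^ s : ℤ[X]) =
      ∑ i ∈ Finset.range (s + 1), C ((s.choose i : ℤ)) * X ^ (s * (1 + i * p)) := by
    rw [hy, mul_pow, add_pow, Finset.mul_sum]
    refine Finset.sum_congr rfl fun i hi => ?_
    rw [one_pow, mul_one, ← pow_mul]
    have : (s.choose i : ℤ[X]) = C ((s.choose i : ℤ)) := by simp
    rw [this]
    ring_nf
  have key : (1 - X - X ^ (p * s + 1) : ℤ[X]) *
      (∑ i ∈ Finset.range s, X ^ i * (X ^ (s * p) + 1) ^ i) =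
      1 - ∑ i ∈ Finset.range (s + 1), C ((s.choose i : ℤ)) * X ^ (s * (1 + i * p)) := by
    rw [h1, h2, h3, h4]
  exact ⟨Dvd.intro _ key, key⟩
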